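/- The following are equivalent for a partial order ≿ on a nonempty set X: (1) every set of preferences on X has a minimum upper bound with respect to single-crossing dominance; (2) every two-element set of preferences has a minimum upper bound; (3) ≿ is crown-free and diamond-free. -/

import Mathlib

variable {X : Type*}

/-- Strict part of a binary relation. -/
def SPref (R : X → X → Prop) (x y : X) : Prop := R x y ∧ ¬ R y x

/-- A preference: a complete and transitive binary relation. -/
def IsPref (R : X → X → Prop) : Prop := (∀ x y, R x y ∨ R y x) ∧ Transitive R

/-- Single-crossing dominance (`R'` dominates `R`) w.r.t. the partial order `≤`. -/
def SC [PartialOrder X] (R' R : X → X → Prop) : Prop :=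
  ∀ x y : X, y ≤ x → (R x y → R' x y) ∧ (SPref R x y → SPref R' x y)

/-- Upper bound of a set of preferences w.r.t. single-crossing dominance. -/
def IsUB [PartialOrder X] (P : Set (X → X → Prop)) (R' : X → X → Prop) : Prop :=
  IsPref R' ∧ ∀ R ∈ P, SC R' R

/-- Minimum upper bound of a set of preferences w.r.t. single-crossing dominance. -/
def IsMUB [PartialOrder X] (P : Set (X → X → Prop)) (Rs : X → X → Prop) : Prop :=
  IsUB P Rs ∧ ∀ R'', IsUB P R'' → SC R'' Rs

/-- A `K`-crown (K ≥ 4 even) for the relation `le`, indexed by `1,…,K` with the cyclic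
convention `a (K+1) = a 1`: non-adjacent elements are incomparable, and
`a (k-1) > a k < a (k+1)` for each even `k` with `1 < k ≤ K`. -/
def IsCrown (le : X → X → Prop) (K : ℕ) (a : ℕ → X) : Prop :=
  4 ≤ K ∧ Even K ∧
  (∀ k k', 1 ≤ k → k + 2 ≤ k' → k' ≤ K → ¬(k = 1 ∧ k' = K) →
    ¬ le (a k) (a k') ∧ ¬ le (a k') (a k)) ∧
  (∀ k, 1 < k → k ≤ K → Even k →
    (le (a k) (a (k - 1)) ∧ ¬ le (a (k - 1)) (a k)) ∧
    (le (a k) (a (if k = K then 1 else k + 1)) ∧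
      ¬ le (a (if k = K then 1 else k + 1)) (a k)))

/-- `le` contains no crowns. -/
def CrownFree (le : X → X → Prop) : Prop := ¬ ∃ K a, IsCrown le K a

/-- A diamond: `a ≥ b ≥ d`, `a ≥ c ≥ d`, with `b, c` incomparable. -/
def IsDiamond (le : X → X → Prop) (a b c d : X) : Prop :=
  le b a ∧ le d b ∧ le c a ∧ le d c ∧ ¬ le b c ∧ ¬ le c b

/-- `le` contains no diamonds. -/
def DiamondFree (le : X → X → Prop) : Prop := ¬ ∃ a b c d, IsDiamond le a b c d

namespace MUBAux

variable {X : Type*} [PartialOrder X]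

/-- direct forced (weak) link: some preference in `P` weakly prefers `x` over `y ≤ x`. -/
def Lk (P : Set (X → X → Prop)) (x y : X) : Prop := y ≤ x ∧ ∃ R ∈ P, R x y

/-- direct forced strict link. -/
def SLk (P : Set (X → X → Prop)) (x y : X) : Prop := y ≤ x ∧ ∃ R ∈ P, SPref R x y

/-- forced weak relation: chains of links. -/
def W (P : Set (X → X → Prop)) : X → X → Prop := Relation.ReflTransGen (Lk P)

/-- forced strict relation: a chain containing a strict link. -/
def Str (P : Set (X → X → Prop)) (x y : X) : Prop :=
  ∃ u v, W P x u ∧ SLk P u v ∧ W P v y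

variable {P : Set (X → X → Prop)}

lemma W.le' {x y : X} (h : W P x y) : y ≤ x := by
  induction h with
  | refl => exact le_refl _
  | tail _ h ih => exact h.1.trans ih

lemma SLk.lt {x y : X} (h : SLk P x y) : y < x := by
  rcases h with ⟨hle, R, _, hR⟩
  refine lt_of_le_of_ne hle fun he => ?_
  subst he; exact hR.2 hR.1

lemma SLk.toLk {x y : X} (h : SLk P x y) : Lk P x y :=
  ⟨h.1, h.2.choose, h.2.choose_spec.1, h.2.choose_spec.2.1⟩

lemma Str.lt {x y : X} (h : Str P x y) : y < x := by
  rcases h with ⟨u, v, hxu, hsl, hvy⟩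
  exact lt_of_le_of_lt hvy.le' (lt_of_lt_of_le hsl.lt hxu.le')

lemma W.trans' {x y z : X} (h1 : W P x y) (h2 : W P y z) : W P x z :=
  Relation.ReflTransGen.trans h1 h2

lemma Str.toW {x y : X} (h : Str P x y) : W P x y := by
  rcases h with ⟨u, v, hxu, hsl, hvy⟩
  exact hxu.trans' (Relation.ReflTransGen.head hsl.toLk hvy)

lemma W.str {x y z : X} (h1 : W P x y) (h2 : Str P y z) : Str P x z := by
  rcases h2 with ⟨u, v, hyu, hsl, hvz⟩
  exact ⟨u, v, h1.trans' hyu, hsl, hvz⟩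

lemma Str.w {x y z : X} (h1 : Str P x y) (h2 : W P y z) : Str P x z := by
  rcases h1 with ⟨u, v, hxu, hsl, hvy⟩
  exact ⟨u, v, hxu, hsl, hvy.trans' h2⟩

section FGH

variable (hP : ∀ R ∈ P, IsPref R) (hdf : DiamondFree ((· ≤ ·) : X → X → Prop))
include hP hdf

/-- Lemma F : inserting `y` in a forced chain, lower part. -/
lemma lemF {x y z : X} (hzy : z ≤ y) (hyx : y ≤ x) (h : W P x z) :
    W P y z ∨ Str P x y := by
  revert hyx
  induction h using Relation.ReflTransGen.head_induction_on with
  | refl =>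
    intro hyx
    have : y = z := le_antisymm hyx hzy
    subst this; exact Or.inl Relation.ReflTransGen.refl
  | head h' hc IH =>
    intro hyx
    rename_i a c
    have hca : c ≤ a := h'.1
    have hzc : z ≤ c := W.le' hc
    have hyc : y ≤ c ∨ c ≤ y := by
      by_contra hcon
      push_neg at hcon
      exact hdf ⟨a, y, c, z, hyx, hzy, hca, hzc, hcon.1, hcon.2⟩
    rcases hyc with hyc | hcy
    · rcases IH hyc with h | h
      · exact Or.inl h
      · rcases h with ⟨u, v, hcu, hsl, hvy⟩
        exact Or.inr ⟨u, v, Relation.ReflTransGen.head h' hcu, hsl, hvy⟩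
    · obtain ⟨-, R, hRP, hRac⟩ := h'
      obtain ⟨hcomp, htrans⟩ := hP R hRP
      by_cases hay : R a y
      · by_cases hya : R y a
        · exact Or.inl (Relation.ReflTransGen.head ⟨hcy, R, hRP, htrans hya hRac⟩ hc)
        · exact Or.inr ⟨a, y, Relation.ReflTransGen.refl, ⟨hyx, R, hRP, hay, hya⟩,
            Relation.ReflTransGen.refl⟩
      · have hya : R y a := (hcomp a y).resolve_left hay
        exact Or.inl (Relation.ReflTransGen.head ⟨hcy, R, hRP, htrans hya hRac⟩ hc)

/-- Lemma G : inserting `y` in a forced chain, upper part. -/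
lemma lemG {x y z : X} (hzy : z ≤ y) (hyx : y ≤ x) (h : W P x z) :
    W P x y ∨ Str P y z := by
  revert hyx
  induction h using Relation.ReflTransGen.head_induction_on with
  | refl =>
    intro hyx
    have : y = z := le_antisymm hyx hzy
    subst this; exact Or.inl Relation.ReflTransGen.refl
  | head h' hc IH =>
    intro hyx
    rename_i a c
    have hca : c ≤ a := h'.1
    have hzc : z ≤ c := W.le' hc
    have hyc : y ≤ c ∨ c ≤ y := by
      by_contra hcon
      push_neg at hcon
      exact hdf ⟨a, y, c, z, hyx, hzy, hca, hzc, hcon.1, hcon.2⟩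
    rcases hyc with hyc | hcy
    · rcases IH hyc with h | h
      · exact Or.inl (Relation.ReflTransGen.head h' h)
      · exact Or.inr h
    · obtain ⟨-, R, hRP, hRac⟩ := h'
      obtain ⟨hcomp, htrans⟩ := hP R hRP
      by_cases hay : R a y
      · exact Or.inl (Relation.ReflTransGen.single ⟨hyx, R, hRP, hay⟩)
      · have hya : R y a := (hcomp a y).resolve_left hay
        have hyc' : R y c := htrans hya hRac
        have : ¬ R c y := fun hcyR => hay (htrans hRac hcyR)
        exact Or.inr ⟨y, c, Relation.ReflTransGen.refl, ⟨hcy, R, hRP, hyc', this⟩, hc⟩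

/-- Lemma H : inserting `y` in a strictly forced chain. -/
lemma lemH {x y z : X} (hzy : z ≤ y) (hyx : y ≤ x) (h : Str P x z) :
    Str P x y ∨ Str P y z := by
  obtain ⟨u, v, hxu, hsl, hvz⟩ := h
  have hvu : v ≤ u := hsl.1
  have hux : u ≤ x := hxu.le'
  have hzv : z ≤ v := hvz.le'
  by_cases hyv : y ≤ v
  · rcases lemG hP hdf hzy hyv hvz with h | h
    · exact Or.inl ⟨u, v, hxu, hsl, h⟩
    · exact Or.inr h
  · by_cases huy : u ≤ y
    · rcases lemF hP hdf huy hyx hxu with h | h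
      · exact Or.inr ⟨u, v, h, hsl, hvz⟩
      · exact Or.inl h
    · -- y is comparable to both u and v ; here v ≤ y ≤ u must hold
      have hyu : y ≤ u ∨ u ≤ y := by
        by_contra hcon
        push_neg at hcon
        exact hdf ⟨x, y, u, z, hyx, hzy, hux, (hvu.trans' hzv : z ≤ u), hcon.1, hcon.2⟩
      have hvy : v ≤ y ∨ y ≤ v := by
        by_contra hcon
        push_neg at hcon
        exact hdf ⟨x, v, y, z, hvu.trans hux, hzv, hyx, hzy, hcon.1, hcon.2⟩
      have hyu' : y ≤ u := hyu.resolve_right huy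
      have hvy' : v ≤ y := hvy.resolve_right hyv
      obtain ⟨-, R, hRP, hRuv⟩ := hsl
      obtain ⟨hcomp, htrans⟩ := hP R hRP
      by_cases huyR : R u y
      · by_cases hyuR : R y u
        · have h1 : R y v := htrans hyuR hRuv.1
          have h2 : ¬ R v y := fun hvyR => hRuv.2 (htrans hvyR hyuR)
          exact Or.inr ⟨y, v, Relation.ReflTransGen.refl, ⟨hvy', R, hRP, h1, h2⟩, hvz⟩
        · exact Or.inl ⟨u, y, hxu, ⟨hyu', R, hRP, huyR, hyuR⟩, Relation.ReflTransGen.refl⟩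
      · have hyuR : R y u := (hcomp u y).resolve_left huyR
        have h1 : R y v := htrans hyuR hRuv.1
        have h2 : ¬ R v y := fun hvyR => huyR (htrans hRuv.1 hvyR)
        exact Or.inr ⟨y, v, Relation.ReflTransGen.refl, ⟨hvy', R, hRP, h1, h2⟩, hvz⟩

end FGH

end MUBAux

namespace MUBAux

variable {X : Type*} [PartialOrder X] {P : Set (X → X → Prop)}

/-- forced weak edge of the "minimal candidate" preference on comparable pairs. -/
def Ed (P : Set (X → X → Prop)) (x y : X) : Prop :=
  (y ≤ x ∧ W P x y) ∨ (x ≤ y ∧ ¬ Str P y x)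

/-- forced strict edge. -/
def SEd (P : Set (X → X → Prop)) (x y : X) : Prop :=
  (y ≤ x ∧ Str P x y) ∨ (x ≤ y ∧ ¬ W P y x)

lemma SEd.toEd {x y : X} (h : SEd P x y) : Ed P x y := by
  rcases h with ⟨h1, h2⟩ | ⟨h1, h2⟩
  · exact Or.inl ⟨h1, h2.toW⟩
  · exact Or.inr ⟨h1, fun hs => h2 hs.toW⟩

lemma SEd.str_of_le {a b : X} (h : SEd P a b) (hba : b ≤ a) : Str P a b := by
  rcases h with ⟨-, h⟩ | ⟨hab, hnW⟩
  · exact h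
  · obtain rfl := le_antisymm hab hba
    exact absurd Relation.ReflTransGen.refl hnW

lemma SEd.nW_of_le {a b : X} (h : SEd P a b) (hab : a ≤ b) : ¬ W P b a := by
  rcases h with ⟨hba, hs⟩ | ⟨-, h⟩
  · obtain rfl := le_antisymm hab hba
    exact absurd hs.lt (lt_irrefl a)
  · exact h

lemma sed_irrefl {x : X} (h : SEd P x x) : False := by
  rcases h with ⟨-, hs⟩ | ⟨-, hnW⟩
  · exact absurd hs.lt (lt_irrefl x)
  · exact hnW Relation.ReflTransGen.refl

lemma sed_ed_asymm {x y : X} (h : SEd P x y) (h' : Ed P y x) : False := by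
  rcases h' with ⟨hxy, hW⟩ | ⟨hyx, hnS⟩
  · exact (h.nW_of_le hxy) hW
  · exact hnS (h.str_of_le hyx)

lemma ed_dichot {a b : X} (hba : b ≤ a) : Ed P a b ∨ SEd P b a := by
  by_cases h : W P a b
  · exact Or.inl (Or.inl ⟨hba, h⟩)
  · exact Or.inr (Or.inr ⟨hba, h⟩)

lemma Ed.comparable {x y : X} (h : Ed P x y) : y ≤ x ∨ x ≤ y := by
  rcases h with ⟨h, -⟩ | ⟨h, -⟩
  · exact Or.inl h
  · exact Or.inr h

section Comp

variable (hP : ∀ R ∈ P, IsPref R) (hdf : DiamondFree ((· ≤ ·) : X → X → Prop))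
include hP hdf

/-- Composition of consecutive forced edges when the endpoints are comparable. -/
lemma ed_comp {a b c : X} (h1 : Ed P a b) (h2 : Ed P b c) (hac : c ≤ a ∨ a ≤ c) :
    Ed P a c ∧ (SEd P a b ∨ SEd P b c → SEd P a c) := by
  rcases h1 with ⟨hba, hW1⟩ | ⟨hab, hnS1⟩ <;> rcases h2 with ⟨hcb, hW2⟩ | ⟨hbc, hnS2⟩
  · -- down-down
    have hca : c ≤ a := hcb.trans hba
    refine ⟨Or.inl ⟨hca, hW1.trans' hW2⟩, fun hs => ?_⟩
    rcases hs with hs | hs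
    · exact Or.inl ⟨hca, (hs.str_of_le hba).w hW2⟩
    · exact Or.inl ⟨hca, hW1.str (hs.str_of_le hcb)⟩
  · -- down-up
    rcases hac with hca | hac'
    · have hWac : W P a c := (lemG hP hdf hbc hca hW1).resolve_right hnS2
      refine ⟨Or.inl ⟨hca, hWac⟩, fun hs => ?_⟩
      rcases hs with hs | hs
      · exact Or.inl ⟨hca, (lemH hP hdf hbc hca (hs.str_of_le hba)).resolve_right hnS2⟩
      · exact Or.inl ⟨hca, (lemF hP hdf hbc hca hW1).resolve_left (hs.nW_of_le hbc)⟩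
    · refine ⟨Or.inr ⟨hac', fun hs => hnS2 (hs.w hW1)⟩, fun hs => ?_⟩
      rcases hs with hs | hs
      · exact Or.inr ⟨hac', fun hW => hnS2 (hW.str (hs.str_of_le hba))⟩
      · exact Or.inr ⟨hac', fun hW => (hs.nW_of_le hbc) (hW.trans' hW1)⟩
  · -- up-down
    rcases hac with hca | hac'
    · have hWac : W P a c := (lemF hP hdf hca hab hW2).resolve_right hnS1
      refine ⟨Or.inl ⟨hca, hWac⟩, fun hs => ?_⟩
      rcases hs with hs | hs
      · exact Or.inl ⟨hca, (lemG hP hdf hca hab hW2).resolve_left (hs.nW_of_le hab)⟩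
      · exact Or.inl ⟨hca, (lemH hP hdf hca hab (hs.str_of_le hcb)).resolve_left hnS1⟩
    · refine ⟨Or.inr ⟨hac', fun hs => hnS1 (hW2.str hs)⟩, fun hs => ?_⟩
      rcases hs with hs | hs
      · exact Or.inr ⟨hac', fun hW => (hs.nW_of_le hab) (hW2.trans' hW)⟩
      · exact Or.inr ⟨hac', fun hW => hnS1 ((hs.str_of_le hcb).w hW)⟩
  · -- up-up
    have hac' : a ≤ c := hab.trans hbc
    refine ⟨Or.inr ⟨hac', fun hs => (lemH hP hdf hab hbc hs).elim hnS2 hnS1⟩, fun hs => ?_⟩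
    rcases hs with hs | hs
    · exact Or.inr ⟨hac', fun hW =>
        (lemF hP hdf hab hbc hW).elim (hs.nW_of_le hab) hnS2⟩
    · exact Or.inr ⟨hac', fun hW =>
        (lemG hP hdf hab hbc hW).elim (hs.nW_of_le hbc) hnS1⟩

end Comp

end MUBAux

namespace MUBAux

variable {X : Type*} [PartialOrder X] {P : Set (X → X → Prop)}

/-- A cycle of forced edges containing a strict edge. -/
def IsCyc (P : Set (X → X → Prop)) (n : ℕ) (e : ℕ → X) : Prop :=
  2 ≤ n ∧ (∀ i, e (i + n) = e i) ∧ (∀ i, Ed P (e i) (e (i + 1))) ∧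
    ∃ i, SEd P (e i) (e (i + 1))

lemma mkCyc {m : ℕ} (hm : 2 ≤ m) (f : ℕ → X)
    (hedge : ∀ i, i + 1 < m → Ed P (f i) (f (i + 1)))
    (hwrap : Ed P (f (m - 1)) (f 0))
    (hstrict : (∃ i, i + 1 < m ∧ SEd P (f i) (f (i + 1))) ∨ SEd P (f (m - 1)) (f 0)) :
    IsCyc P m (fun i => f (i % m)) := by
  have hm0 : 0 < m := by omega
  refine ⟨hm, fun i => by simp, fun i => ?_, ?_⟩
  · show Ed P (f (i % m)) (f ((i + 1) % m))
    have hr : i % m < m := Nat.mod_lt _ hm0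
    have h1 : (i + 1) % m = (i % m + 1) % m := by
      rw [Nat.add_mod i 1 m, Nat.mod_eq_of_lt (show 1 < m by omega)]
    by_cases h : i % m + 1 < m
    · rw [h1, Nat.mod_eq_of_lt h]
      exact hedge _ h
    · have h2 : i % m = m - 1 := by omega
      have h3 : i % m + 1 = m := by omega
      rw [h1, h3, Nat.mod_self, h2]
      exact hwrap
  · rcases hstrict with ⟨i, hi, hS⟩ | hS
    · refine ⟨i, ?_⟩
      show SEd P (f (i % m)) (f ((i + 1) % m))
      rw [Nat.mod_eq_of_lt (by omega : i < m), Nat.mod_eq_of_lt hi]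
      exact hS
    · refine ⟨m - 1, ?_⟩
      show SEd P (f ((m - 1) % m)) (f ((m - 1 + 1) % m))
      rw [show m - 1 + 1 = m by omega, Nat.mod_self, Nat.mod_eq_of_lt (by omega)]
      exact hS

theorem noCyc (hP : ∀ R ∈ P, IsPref R) (hdf : DiamondFree ((· ≤ ·) : X → X → Prop))
    (hcf : CrownFree ((· ≤ ·) : X → X → Prop)) :
    ∀ n (e : ℕ → X), ¬ IsCyc P n e := by
  intro n
  induction n using Nat.strong_induction_on with
  | _ n IH =>
  intro e hC
  obtain ⟨hn2, hper, hedge, i₀, hs₀⟩ := hC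
  have hper2 : ∀ i t, e (i + n * t) = e i := by
    intro i t
    induction t with
    | zero => simp
    | succ t ih => rw [Nat.mul_succ, ← Nat.add_assoc, hper]; exact ih
  have eq_e : ∀ {i j : ℕ}, i = j → e i = e j := fun h => by rw [h]
  -- a strict edge can be found in any window of length n
  have hswin : ∀ k, ∃ j, k ≤ j ∧ j < k + n ∧ SEd P (e j) (e (j + 1)) := by
    intro k
    obtain ⟨M, r, hr, hk, hM⟩ : ∃ M r, r < n ∧ M + r = k ∧ ∀ i, e (i + M) = e i :=
      ⟨n * (k / n), k % n, Nat.mod_lt _ (by omega), by rw [Nat.div_add_mod],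
        fun i => hper2 i _⟩
    obtain ⟨M', r', hr', hk', hM'⟩ : ∃ M' r', r' < n ∧ M' + r' = i₀ ∧ ∀ i, e (i + M') = e i :=
      ⟨n * (i₀ / n), i₀ % n, Nat.mod_lt _ (by omega), by rw [Nat.div_add_mod],
        fun i => hper2 i _⟩
    have he1 : e r' = e i₀ := by rw [← hk', show M' + r' = r' + M' from by omega]; exact (hM' r').symm
    have he2 : e (r' + 1) = e (i₀ + 1) := by
      rw [← hk', show M' + r' + 1 = r' + 1 + M' from by omega]; exact (hM' (r' + 1)).symm
    have hS' : SEd P (e r') (e (r' + 1)) := by rw [he1, he2]; exact hs₀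
    by_cases hc : r ≤ r'
    · refine ⟨M + r', by omega, by omega, ?_⟩
      have g1 : e (M + r') = e r' := by rw [show M + r' = r' + M from by omega]; exact hM r'
      have g2 : e (M + r' + 1) = e (r' + 1) := by
        rw [show M + r' + 1 = r' + 1 + M from by omega]; exact hM _
      rw [g1, g2]; exact hS'
    · refine ⟨M + n + r', by omega, by omega, ?_⟩
      have g1 : e (M + n + r') = e r' := by
        rw [show M + n + r' = r' + M + n from by omega, hper]
        rw [show r' + M = r' + M from rfl]; exact hM r'
      have g2 : e (M + n + r' + 1) = e (r' + 1) := by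
        rw [show M + n + r' + 1 = r' + 1 + M + n from by omega, hper]; exact hM _
      rw [g1, g2]; exact hS'
  -- n = 2
  by_cases h2 : n = 2
  · obtain ⟨j, -, -, hSj⟩ := hswin 0
    have hE : Ed P (e (j + 1)) (e (j + 2)) := hedge _
    rw [show j + 2 = j + n from by omega, hper] at hE
    exact sed_ed_asymm hSj hE
  -- duplicated adjacent values
  by_cases hdup : ∃ k, e k = e (k + 1)
  · obtain ⟨k, hk⟩ := hdup
    obtain ⟨j, hj1, hj2, hSj⟩ := hswin (k + 1)
    have hjs : j = (j - (k + 1)) + (k + 1) := by omega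
    set s := j - (k + 1) with hsdef
    clear_value s
    have hsn : s < n := by omega
    by_cases hs1 : s = n - 1
    · -- the strict edge is the degenerate one: contradiction
      have g1 : e j = e k := by
        rw [hjs, hs1, show n - 1 + (k + 1) = k + n from by omega, hper]
      have g2 : e (j + 1) = e k := by
        rw [hjs, hs1, show n - 1 + (k + 1) + 1 = (k + 1) + n from by omega, hper, ← hk]
      rw [g1, g2] at hSj
      exact sed_irrefl hSj
    · have hcyc := mkCyc (P := P) (m := n - 1) (by omega) (fun i => e (i + (k + 1)))
        (fun i _ => by
          show Ed P (e (i + (k + 1))) (e (i + 1 + (k + 1)))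
          rw [show i + 1 + (k + 1) = i + (k + 1) + 1 from by omega]
          exact hedge _)
        (by
          show Ed P (e (n - 1 - 1 + (k + 1))) (e (0 + (k + 1)))
          have g : e (n - 1 - 1 + (k + 1) + 1) = e (0 + (k + 1)) := by
            rw [Nat.zero_add, show n - 1 - 1 + (k + 1) + 1 = k + n from by omega, hper]
            exact hk
          rw [← g]
          exact hedge _)
        (by
          by_cases hs2 : s = n - 2
          · refine Or.inr ?_
            show SEd P (e (n - 1 - 1 + (k + 1))) (e (0 + (k + 1)))
            have g1 : e (n - 1 - 1 + (k + 1)) = e j := by rw [hjs, hs2]; rfl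
            have g2 : e (0 + (k + 1)) = e (j + 1) := by
              have gj : e (j + 1) = e (k + 1) := by
                rw [show j + 1 = k + n from by omega, hper]
                exact hk
              rw [gj, Nat.zero_add]
            rw [g1, g2]; exact hSj
          · refine Or.inl ⟨s, by omega, ?_⟩
            show SEd P (e (s + (k + 1))) (e (s + 1 + (k + 1)))
            have g1 : e (s + (k + 1)) = e j := by rw [hjs]
            have g2 : e (s + 1 + (k + 1)) = e (j + 1) := by
              rw [hjs, show s + (k + 1) + 1 = s + 1 + (k + 1) from by omega]
            rw [g1, g2]; exact hSj)
      exact IH (n - 1) (by omega) _ hcyc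
  have hne : ∀ k, e k ≠ e (k + 1) := by push_neg at hdup; exact hdup
  -- kill a short circuit along an arc
  have killArc : ∀ k m, 1 ≤ m → m + 1 < n → Ed P (e (k + m)) (e k) →
      (SEd P (e (k + m)) (e k) ∨ ∃ s, s < m ∧ SEd P (e (k + s)) (e (k + s + 1))) → False := by
    intro k m hm1 hmn hw hstr
    have hcyc := mkCyc (P := P) (m := m + 1) (by omega) (fun j => e (j + k))
      (fun i _ => by
        show Ed P (e (i + k)) (e (i + 1 + k))
        rw [show i + 1 + k = i + k + 1 from by omega]
        exact hedge _)
      (by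
        show Ed P (e (m + 1 - 1 + k)) (e (0 + k))
        rw [show m + 1 - 1 + k = k + m from by omega, show (0 : ℕ) + k = k from by omega]
        exact hw)
      (by
        rcases hstr with hS | ⟨s, hs, hS⟩
        · refine Or.inr ?_
          show SEd P (e (m + 1 - 1 + k)) (e (0 + k))
          rw [show m + 1 - 1 + k = k + m from by omega, show (0 : ℕ) + k = k from by omega]
          exact hS
        · refine Or.inl ⟨s, by omega, ?_⟩
          show SEd P (e (s + k)) (e (s + 1 + k))
          rw [show s + k = k + s from by omega, show s + 1 + k = k + s + 1 from by omega]
          exact hS)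
    exact IH (m + 1) (by omega) _ hcyc
  -- n = 3
  by_cases h3 : n = 3
  · obtain ⟨j, -, -, hSj⟩ := hswin 0
    have hE2 : Ed P (e (j + 2)) (e j) := by
      have h := hedge (j + 2)
      rwa [show j + 2 + 1 = j + n from by omega, hper] at h
    have hE1 : Ed P (e (j + 1)) (e (j + 2)) := by
      have h := hedge (j + 1)
      rwa [show j + 1 + 1 = j + 2 from by omega] at h
    have hcomp := ed_comp hP hdf (hedge j) hE1 hE2.comparable.symm
    exact sed_ed_asymm (hcomp.2 (Or.inl hSj)) hE2
  have hn4 : 4 ≤ n := by omega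
  -- splitting: no comparable pair at cyclic distance between 2 and n-2
  have hsplit : ∀ k m, 2 ≤ m → m ≤ n - 2 → (e (k + m) ≤ e k ∨ e k ≤ e (k + m)) → False := by
    intro k m hm2 hmn hcmp
    obtain ⟨j, hj1, hj2, hSj⟩ := hswin k
    have hjs : j = k + (j - k) := by omega
    set s := j - k with hsdef
    clear_value s
    have hsn : s < n := by omega
    rw [hjs] at hSj
    have hEnm : e (k + m + (n - m)) = e k := by
      rw [show k + m + (n - m) = k + n from by omega, hper]
    rcases hcmp with hyx | hxy
    · by_cases hS : Str P (e k) (e (k + m))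
      · refine killArc (k + m) (n - m) (by omega) (by omega) ?_ (Or.inl ?_)
        · rw [hEnm]; exact (SEd.toEd (Or.inl ⟨hyx, hS⟩))
        · rw [hEnm]; exact Or.inl ⟨hyx, hS⟩
      · by_cases hW : W P (e k) (e (k + m))
        · by_cases harc : s < m
          · exact killArc k m (by omega) (by omega) (Or.inr ⟨hyx, hS⟩)
              (Or.inr ⟨s, harc, hSj⟩)
          · refine killArc (k + m) (n - m) (by omega) (by omega) ?_
              (Or.inr ⟨s - m, by omega, ?_⟩)
            · rw [hEnm]; exact Or.inl ⟨hyx, hW⟩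
            · rw [show k + m + (s - m) = k + s from by omega]
              exact hSj
        · exact killArc k m (by omega) (by omega) (SEd.toEd (Or.inr ⟨hyx, hW⟩))
            (Or.inl (Or.inr ⟨hyx, hW⟩))
    · by_cases hS : Str P (e (k + m)) (e k)
      · exact killArc k m (by omega) (by omega) (SEd.toEd (Or.inl ⟨hxy, hS⟩))
          (Or.inl (Or.inl ⟨hxy, hS⟩))
      · by_cases hW : W P (e (k + m)) (e k)
        · by_cases harc : s < m
          · exact killArc k m (by omega) (by omega) (Or.inl ⟨hxy, hW⟩)
              (Or.inr ⟨s, harc, hSj⟩)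
          · refine killArc (k + m) (n - m) (by omega) (by omega) ?_
              (Or.inr ⟨s - m, by omega, ?_⟩)
            · rw [hEnm]; exact Or.inr ⟨hxy, hS⟩
            · rw [show k + m + (s - m) = k + s from by omega]
              exact hSj
        · refine killArc (k + m) (n - m) (by omega) (by omega) ?_ (Or.inl ?_)
          · rw [hEnm]; exact (SEd.toEd (Or.inr ⟨hxy, hW⟩))
          · rw [hEnm]; exact Or.inr ⟨hxy, hW⟩
  have hinc : ∀ k m, 2 ≤ m → m ≤ n - 2 → ¬ (e (k + m) ≤ e k) ∧ ¬ (e k ≤ e (k + m)) := by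
    intro k m h1 h2
    exact ⟨fun h => hsplit k m h1 h2 (Or.inl h), fun h => hsplit k m h1 h2 (Or.inr h)⟩
  have hadj : ∀ k, e (k + 1) < e k ∨ e k < e (k + 1) := by
    intro k
    rcases (hedge k).comparable with h | h
    · exact Or.inl (lt_of_le_of_ne h (fun he => hne k he.symm))
    · exact Or.inr (lt_of_le_of_ne h (hne k))
  have halt : ∀ k, (e (k + 2) < e (k + 1)) ↔ ¬ (e (k + 1) < e k) := by
    intro k
    have hi := hinc k 2 (le_refl 2) (by omega)
    constructor
    · intro h1 h2
      exact hi.1 (h1.le.trans h2.le)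
    · intro h2
      rcases hadj (k + 1) with h | h
      · exact h
      · exact absurd (((hadj k).resolve_left h2).le.trans h.le) hi.2
  have hstep : ∀ m, e (m + 1) < e m → e (m + 3) < e (m + 2) := by
    intro m hm
    exact (halt (m + 1)).mpr (fun h => (halt m).mp h hm)
  have hdall : ∀ t, (e (t + 1) < e t) → ∀ l, e (t + 2 * l + 1) < e (t + 2 * l) := by
    intro t ht l
    induction l with
    | zero => simpa using ht
    | succ l ih =>
      rw [show t + 2 * (l + 1) = t + 2 * l + 2 from by omega]
      exact hstep _ ih
  have hpar : ∀ k, ((e (k + 1) < e k) ↔ (e 1 < e 0)) ↔ Even k := by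
    intro k
    induction k with
    | zero => simp
    | succ k ih =>
      rw [Nat.even_add_one, ← ih]
      simp only [show k + 1 + 1 = k + 2 from rfl]
      have h := halt k
      tauto
  have hEvenn : Even n := by
    refine (hpar n).mp ?_
    have q1 : e (n + 1) = e 1 := by rw [show n + 1 = 1 + n from by omega]; exact hper 1
    have q2 : e n = e 0 := by rw [show n = 0 + n from by omega]; exact hper 0
    rw [q1, q2]
  obtain ⟨t, hdt⟩ : ∃ t, e (t + 1) < e t := by
    rcases hadj 0 with h | h
    · exact ⟨0, h⟩
    · exact ⟨1, (halt 0).mpr (fun h' => lt_asymm h h')⟩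
  have hDt : ∀ l, e (t + 2 * l + 1) < e (t + 2 * l) := hdall t hdt
  have hDt1 : ∀ l, ¬ (e (t + 2 * l + 1 + 1) < e (t + 2 * l + 1)) := by
    intro l h
    exact (halt (t + 2 * l)).mp h (hDt l)
  refine hcf ⟨n, fun k => e (k - 1 + t), hn4, hEvenn, ?_, ?_⟩
  · intro k k' hk1 hkk hk'n hne1K
    have hmn : k' - k ≤ n - 2 := by
      by_cases hq : k = 1
      · have : k' ≠ n := fun h' => hne1K ⟨hq, h'⟩
        omega
      · omega
    have h := hinc (k - 1 + t) (k' - k) (by omega) hmn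
    rw [show k - 1 + t + (k' - k) = k' - 1 + t from by omega] at h
    exact ⟨h.2, h.1⟩
  · intro k hk1 hkn hkeven
    obtain ⟨l, hl⟩ := hkeven
    have h1 := hDt (l - 1)
    rw [show t + 2 * (l - 1) = k - 2 + t from by omega] at h1
    have h1' : e (k - 1 + t) < e (k - 2 + t) := by
      rwa [show k - 2 + t + 1 = k - 1 + t from by omega] at h1
    have h2 := hDt1 (l - 1)
    rw [show t + 2 * (l - 1) + 1 = k - 1 + t from by omega] at h2
    have h2' : e (k - 1 + t) < e (k - 1 + t + 1) := (hadj _).resolve_left h2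
    have hval : e (k - 1 + t + 1) = e ((if k = n then 1 else k + 1) - 1 + t) := by
      by_cases hk : k = n
      · rw [if_pos hk, hk, show n - 1 + t + 1 = t + n from by omega,
          show (1 : ℕ) - 1 + t = t from by omega]
        exact hper t
      · rw [if_neg hk, show k + 1 - 1 + t = k - 1 + t + 1 from by omega]
    constructor
    · exact ⟨h1'.le, h1'.not_ge⟩
    · constructor
      · show e (k - 1 + t) ≤ e ((if k = n then 1 else k + 1) - 1 + t)
        rw [← hval]; exact h2'.le
      · show ¬ e ((if k = n then 1 else k + 1) - 1 + t) ≤ e (k - 1 + t)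
        rw [← hval]; exact h2'.not_ge

end MUBAux

namespace MUBAux

variable {X : Type*} [PartialOrder X] {P : Set (X → X → Prop)}

lemma core (hP : ∀ R ∈ P, IsPref R) (hdf : DiamondFree ((· ≤ ·) : X → X → Prop))
    (hcf : CrownFree ((· ≤ ·) : X → X → Prop)) {x y : X}
    (hS : SEd P x y) (hQ : Relation.ReflTransGen (Ed P) y x) : False := by
  obtain ⟨n, ee, h0, hn, hedges⟩ :
      ∃ n : ℕ, ∃ ee : ℕ → X, ee 0 = y ∧ ee n = x ∧ ∀ i < n, Ed P (ee i) (ee (i + 1)) := by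
    clear hS
    induction hQ with
    | refl => exact ⟨0, fun _ => y, rfl, rfl, by omega⟩
    | @tail b c hbc hE ih =>
      obtain ⟨n, ee, h0, hn, he⟩ := ih
      refine ⟨n + 1, fun i => if i = n + 1 then c else ee i, by simp [h0], by simp, ?_⟩
      intro i hi
      by_cases hin : i = n
      · subst hin
        simp only [if_pos rfl, if_neg (by omega : ¬ i = i + 1)]
        rw [hn]
        exact hE
      · simp only [if_neg (by omega : ¬ i = n + 1), if_neg (by omega : ¬ i + 1 = n + 1)]
        exact he i (by omega)
  rcases Nat.eq_zero_or_pos n with h | hpos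
  · subst h
    rw [← h0, hn] at hS
    exact sed_irrefl hS
  · have hcyc := mkCyc (P := P) (m := n + 1) (by omega) ee
      (fun i hi => hedges i (by omega))
      (by
        show Ed P (ee (n + 1 - 1)) (ee 0)
        rw [show n + 1 - 1 = n from by omega, hn, h0]
        exact hS.toEd)
      (Or.inr (by
        show SEd P (ee (n + 1 - 1)) (ee 0)
        rw [show n + 1 - 1 = n from by omega, hn, h0]
        exact hS))
    exact noCyc hP hdf hcf (n + 1) _ hcyc

/-- the preorder generated by the forced edges -/
def Q (P : Set (X → X → Prop)) : X → X → Prop := Relation.ReflTransGen (Ed P)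

def eqv (P : Set (X → X → Prop)) : Setoid X :=
  ⟨fun a b => Q P a b ∧ Q P b a,
    ⟨fun _ => ⟨Relation.ReflTransGen.refl, Relation.ReflTransGen.refl⟩,
     fun h => ⟨h.2, h.1⟩,
     fun h1 h2 => ⟨h1.1.trans h2.1, h2.2.trans h1.2⟩⟩⟩

def qrel (P : Set (X → X → Prop)) :
    Quotient (eqv P) → Quotient (eqv P) → Prop :=
  Quotient.lift₂ (fun a b => Q P a b)
    (fun a b a' b' ha hb => propext
      ⟨fun h => (ha.2.trans h).trans hb.1, fun h => (ha.1.trans h).trans hb.2⟩)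

lemma qrel_po (P : Set (X → X → Prop)) : IsPartialOrder (Quotient (eqv P)) (qrel P) := by
  refine { refl := ?_, trans := ?_, antisymm := ?_ }
  · intro A
    induction A using Quotient.inductionOn with
    | _ a => exact Relation.ReflTransGen.refl
  · intro A B C
    induction A using Quotient.inductionOn with
    | _ a =>
    induction B using Quotient.inductionOn with
    | _ b =>
    induction C using Quotient.inductionOn with
    | _ c => exact fun hab hbc => Relation.ReflTransGen.trans hab hbc
  · intro A B
    induction A using Quotient.inductionOn with
    | _ a =>
    induction B using Quotient.inductionOn with
    | _ b => exact fun hab hba => Quotient.sound ⟨hab, hba⟩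

theorem exists_mub (hP : ∀ R ∈ P, IsPref R) (hdf : DiamondFree ((· ≤ ·) : X → X → Prop))
    (hcf : CrownFree ((· ≤ ·) : X → X → Prop)) : ∃ Rs, IsMUB P Rs := by
  haveI := qrel_po P
  obtain ⟨so, hlin, hext⟩ := extend_partialOrder (qrel P)
  set Rs : X → X → Prop := fun x y => so (Quotient.mk (eqv P) x) (Quotient.mk (eqv P) y)
    with hRs
  have hEd : ∀ {a b : X}, Ed P a b → Rs a b := by
    intro a b h
    exact hext _ _ (Relation.ReflTransGen.single h)
  have hSEd : ∀ {a b : X}, SEd P a b → SPref Rs a b := by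
    intro a b h
    refine ⟨hEd h.toEd, fun hba => ?_⟩
    have : (Quotient.mk (eqv P) a) = (Quotient.mk (eqv P) b) :=
      by haveI := hlin; exact Std.Antisymm.antisymm _ _ (hEd h.toEd) hba
    have hq : Q P b a := (Quotient.exact this).2
    exact core hP hdf hcf h hq
  have hpref : IsPref Rs := by
    constructor
    · intro x y
      haveI := hlin; exact Std.Total.total _ _
    · intro x y z hxy hyz
      exact hlin.toIsPartialOrder.toIsPreorder.toIsTrans.trans _ _ _ hxy hyz
  refine ⟨Rs, ⟨hpref, ?_⟩, ?_⟩
  · -- upper bound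
    intro R hRP x y hyx
    constructor
    · intro hR
      exact hEd (Or.inl ⟨hyx, Relation.ReflTransGen.single ⟨hyx, R, hRP, hR⟩⟩)
    · intro hSP
      exact hSEd (Or.inl ⟨hyx, x, y, Relation.ReflTransGen.refl,
        ⟨hyx, R, hRP, hSP⟩, Relation.ReflTransGen.refl⟩)
  · -- minimality
    rintro R'' ⟨hpref'', hub''⟩ x y hyx
    have hWR : ∀ {a b : X}, W P a b → R'' a b := by
      intro a b h
      induction h using Relation.ReflTransGen.head_induction_on with
      | refl => exact (hpref''.1 b b).elim id id
      | head h' _ ih =>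
        obtain ⟨hle, R, hRP, hR⟩ := h'
        exact hpref''.2 ((hub'' R hRP _ _ hle).1 hR) ih
    have hSR : ∀ {a b : X}, Str P a b → SPref R'' a b := by
      rintro a b ⟨u, v, hau, hsl, hvb⟩
      have h1 : R'' a u := hWR hau
      have h2 : SPref R'' u v := (hub'' _ hsl.2.choose_spec.1 _ _ hsl.1).2
        hsl.2.choose_spec.2
      have h3 : R'' v b := hWR hvb
      exact ⟨hpref''.2 (hpref''.2 h1 h2.1) h3,
        fun hba => h2.2 (hpref''.2 (hpref''.2 h3 hba) h1)⟩
    constructor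
    · intro hRs
      by_cases hxy : x = y
      · subst hxy; exact (hpref''.1 x x).elim id id
      · by_cases hW : W P x y
        · exact hWR hW
        · exact absurd hRs (hSEd (Or.inr ⟨hyx, hW⟩)).2
    · intro hRs
      by_cases hxy : x = y
      · subst hxy; exact absurd hRs.1 hRs.2
      · by_cases hS : Str P x y
        · exact hSR hS
        · exact absurd (hEd (Or.inr ⟨hyx, hS⟩)) hRs.2

end MUBAux

namespace MUBAux

variable {X : Type*}

open Classical in
noncomputable def rk3 (P1 P2 P3 : X → Prop) (n1 n2 n3 : ℕ) (x : X) : ℕ :=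
  if P1 x then n1 else if P2 x then n2 else if P3 x then n3 else 0

lemma rk3_1 {P1 P2 P3 : X → Prop} {n1 n2 n3 : ℕ} {x : X} (h : P1 x) :
    rk3 P1 P2 P3 n1 n2 n3 x = n1 := by unfold rk3; rw [if_pos h]

lemma rk3_2 {P1 P2 P3 : X → Prop} {n1 n2 n3 : ℕ} {x : X} (h1 : ¬ P1 x) (h2 : P2 x) :
    rk3 P1 P2 P3 n1 n2 n3 x = n2 := by unfold rk3; rw [if_neg h1, if_pos h2]

lemma rk3_3 {P1 P2 P3 : X → Prop} {n1 n2 n3 : ℕ} {x : X} (h1 : ¬ P1 x) (h2 : ¬ P2 x)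
    (h3 : P3 x) : rk3 P1 P2 P3 n1 n2 n3 x = n3 := by
  unfold rk3; rw [if_neg h1, if_neg h2, if_pos h3]

lemma rk3_0 {P1 P2 P3 : X → Prop} {n1 n2 n3 : ℕ} {x : X} (h1 : ¬ P1 x) (h2 : ¬ P2 x)
    (h3 : ¬ P3 x) : rk3 P1 P2 P3 n1 n2 n3 x = 0 := by
  unfold rk3; rw [if_neg h1, if_neg h2, if_neg h3]

lemma isPref_rk (u : X → ℕ) : IsPref (fun x y => u y ≤ u x) :=
  ⟨fun _ _ => le_total _ _, fun _ _ _ h1 h2 => le_trans h2 h1⟩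

lemma sc_rank [PartialOrder X] {u v : X → ℕ}
    (h : ∀ x y : X, y ≤ x → (u y ≤ u x → v y ≤ v x) ∧ (u y < u x → v y < v x)) :
    SC (fun x y => v y ≤ v x) (fun x y => u y ≤ u x) := by
  intro x y hxy
  obtain ⟨h1, h2⟩ := h x y hxy
  refine ⟨h1, fun hs => ?_⟩
  have hlt : u y < u x := by
    have := hs.1; have := hs.2; omega
  have hv := h2 hlt
  exact ⟨hv.le, hv.not_ge⟩

end MUBAux

namespace MUBAux

variable {X : Type*} [PartialOrder X]

theorem diamond_no_mub {a b c d : X} (hdia : IsDiamond ((· ≤ ·) : X → X → Prop) a b c d) :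
    ¬ (∀ R1 R2 : X → X → Prop, IsPref R1 → IsPref R2 → ∃ Rs, IsMUB {R1, R2} Rs) := by
  obtain ⟨hba, hdb, hca, hdc, hbc, hcb⟩ := hdia
  intro hmub
  have neab : a ≠ b := fun h => hcb (h ▸ hca)
  have neac : a ≠ c := fun h => hbc (h ▸ hba)
  have nead : a ≠ d := fun h => hbc ((hba.trans h.le).trans hdc)
  have nebc : b ≠ c := fun h => hbc h.le
  have nebd : b ≠ d := fun h => hbc (h.le.trans hdc)
  have necd : c ≠ d := fun h => hcb (h.le.trans hdb)
  have nab : ¬ a ≤ b := fun h => hcb (hca.trans h)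
  have nac : ¬ a ≤ c := fun h => hbc (hba.trans h)
  have nad : ¬ a ≤ d := fun h => hbc ((hba.trans h).trans hdc)
  have nbd : ¬ b ≤ d := fun h => hbc (h.trans hdc)
  have ncd : ¬ c ≤ d := fun h => hcb (h.trans hdb)
  classical
  -- the two preferences and the two upper-bound witnesses, as rank functions
  set u1 := rk3 (fun x : X => x = d) (fun x => x = c) (fun x => x = a ∨ x = b) 3 2 1 with hu1
  set u2 := rk3 (fun x : X => x = b) (fun x => x = d) (fun x => x = c) 3 2 1 with hu2
  set v1 := rk3 (fun x : X => x = a ∨ x = b ∨ a < x) (fun x => x = d) (fun x => x = c) 3 2 1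
    with hv1
  set v3 := rk3 (fun x : X => x = c) (fun x => x = a ∨ x = b ∨ a < x) (fun x => x = d) 5 4 3
    with hv3
  have np1c : ¬ (c = a ∨ c = b ∨ a < c) := by
    rintro (h | h | h); exacts [neac h.symm, nebc h.symm, nac h.le]
  have np1d : ¬ (d = a ∨ d = b ∨ a < d) := by
    rintro (h | h | h); exacts [nead h.symm, nebd h.symm, nad h.le]
  have hu1a : u1 a = 1 := rk3_3 nead neac (Or.inl rfl)
  have hu1b : u1 b = 1 := rk3_3 nebd nebc (Or.inr rfl)
  have hu1c : u1 c = 2 := rk3_2 necd rfl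
  have hu1d : u1 d = 3 := rk3_1 rfl
  have hu2a : u2 a = 0 := rk3_0 neab nead neac
  have hu2b : u2 b = 3 := rk3_1 rfl
  have hu2c : u2 c = 1 := rk3_3 nebc.symm necd rfl
  have hu2d : u2 d = 2 := rk3_2 nebd.symm rfl
  have hv1a : v1 a = 3 := rk3_1 (Or.inl rfl)
  have hv1b : v1 b = 3 := rk3_1 (Or.inr (Or.inl rfl))
  have hv1c : v1 c = 1 := rk3_3 np1c necd rfl
  have hv1d : v1 d = 2 := rk3_2 np1d rfl
  have hv3a : v3 a = 4 := rk3_2 neac (Or.inl rfl)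
  have hv3b : v3 b = 4 := rk3_2 nebc (Or.inr (Or.inl rfl))
  have hv3c : v3 c = 5 := rk3_1 rfl
  have hv3d : v3 d = 3 := rk3_3 necd.symm np1d rfl
  have hu1o : ∀ x : X, x ≠ a → x ≠ b → x ≠ c → x ≠ d → u1 x = 0 :=
    fun x h1 h2 h3 h4 => rk3_0 h4 h3 (by tauto)
  have hu2o : ∀ x : X, x ≠ a → x ≠ b → x ≠ c → x ≠ d → u2 x = 0 :=
    fun x h1 h2 h3 h4 => rk3_0 h2 h4 h3
  have classify : ∀ x : X, x = a ∨ x = b ∨ x = c ∨ x = d ∨ (x ≠ a ∧ x ≠ b ∧ x ≠ c ∧ x ≠ d) :=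
    fun x => by tauto
  -- SC checks
  have A1 : ∀ x y : X, y ≤ x → (u1 y ≤ u1 x → v1 y ≤ v1 x) ∧ (u1 y < u1 x → v1 y < v1 x) := by
    intro x y hxy
    by_cases hne : x = y
    · subst hne; exact ⟨fun _ => le_rfl, fun h => absurd h (lt_irrefl _)⟩
    rcases classify x with rfl | rfl | rfl | rfl | hx
    · rcases classify y with rfl | rfl | rfl | rfl | hy
      · exact absurd rfl hne
      · rw [hu1a, hu1b, hv1a, hv1b]; omega
      · rw [hu1a, hu1c]; omega
      · rw [hu1a, hu1d]; omega
      · have h0 : u1 y = 0 := hu1o y hy.1 hy.2.1 hy.2.2.1 hy.2.2.2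
        have hv0 : v1 y = 0 := rk3_0
          (by rintro (h | h | h)
              exacts [hy.1 h, hy.2.1 h, absurd (lt_of_lt_of_le h hxy) (lt_irrefl _)])
          hy.2.2.2 hy.2.2.1
        rw [h0, hv0, hu1a, hv1a]; omega
    · rcases classify y with rfl | rfl | rfl | rfl | hy
      · exact absurd hxy nab
      · exact absurd rfl hne
      · exact absurd hxy hcb
      · rw [hu1d, hu1b]; omega
      · have h0 : u1 y = 0 := hu1o y hy.1 hy.2.1 hy.2.2.1 hy.2.2.2
        have hv0 : v1 y = 0 := rk3_0
          (by rintro (h | h | h)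
              exacts [hy.1 h, hy.2.1 h, nab (h.le.trans hxy)])
          hy.2.2.2 hy.2.2.1
        rw [h0, hv0, hu1b, hv1b]; omega
    · rcases classify y with rfl | rfl | rfl | rfl | hy
      · exact absurd hxy nac
      · exact absurd hxy hbc
      · exact absurd rfl hne
      · rw [hu1d, hu1c]; omega
      · have h0 : u1 y = 0 := hu1o y hy.1 hy.2.1 hy.2.2.1 hy.2.2.2
        have hv0 : v1 y = 0 := rk3_0
          (by rintro (h | h | h)
              exacts [hy.1 h, hy.2.1 h, nac (h.le.trans hxy)])
          hy.2.2.2 hy.2.2.1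
        rw [h0, hv0, hu1c, hv1c]; omega
    · rcases classify y with rfl | rfl | rfl | rfl | hy
      · exact absurd hxy nad
      · exact absurd hxy nbd
      · exact absurd hxy ncd
      · exact absurd rfl hne
      · have h0 : u1 y = 0 := hu1o y hy.1 hy.2.1 hy.2.2.1 hy.2.2.2
        have hv0 : v1 y = 0 := rk3_0
          (by rintro (h | h | h)
              exacts [hy.1 h, hy.2.1 h, nad (h.le.trans hxy)])
          hy.2.2.2 hy.2.2.1
        rw [h0, hv0, hu1d, hv1d]; omega
    · have h0x : u1 x = 0 := hu1o x hx.1 hx.2.1 hx.2.2.1 hx.2.2.2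
      rcases classify y with rfl | rfl | rfl | rfl | hy
      · rw [h0x, hu1a]; omega
      · rw [h0x, hu1b]; omega
      · rw [h0x, hu1c]; omega
      · rw [h0x, hu1d]; omega
      · have h0y : u1 y = 0 := hu1o y hy.1 hy.2.1 hy.2.2.1 hy.2.2.2
        refine ⟨fun _ => ?_, fun h => by rw [h0x, h0y] at h; omega⟩
        by_cases hay : a < y
        · have e1 : v1 y = 3 := rk3_1 (Or.inr (Or.inr hay))
          have e2 : v1 x = 3 := rk3_1 (Or.inr (Or.inr (hay.trans_le hxy)))
          rw [e1, e2]
        · have e1 : v1 y = 0 := rk3_0 (by tauto) hy.2.2.2 hy.2.2.1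
          rw [e1]; exact Nat.zero_le _
  have A2 : ∀ x y : X, y ≤ x → (u2 y ≤ u2 x → v1 y ≤ v1 x) ∧ (u2 y < u2 x → v1 y < v1 x) := by
    intro x y hxy
    by_cases hne : x = y
    · subst hne; exact ⟨fun _ => le_rfl, fun h => absurd h (lt_irrefl _)⟩
    rcases classify x with rfl | rfl | rfl | rfl | hx
    · rcases classify y with rfl | rfl | rfl | rfl | hy
      · exact absurd rfl hne
      · rw [hu2a, hu2b]; omega
      · rw [hu2a, hu2c]; omega
      · rw [hu2a, hu2d]; omega
      · have h0 : u2 y = 0 := hu2o y hy.1 hy.2.1 hy.2.2.1 hy.2.2.2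
        have hv0 : v1 y = 0 := rk3_0
          (by rintro (h | h | h)
              exacts [hy.1 h, hy.2.1 h, absurd (lt_of_lt_of_le h hxy) (lt_irrefl _)])
          hy.2.2.2 hy.2.2.1
        rw [h0, hv0, hu2a, hv1a]; omega
    · rcases classify y with rfl | rfl | rfl | rfl | hy
      · exact absurd hxy nab
      · exact absurd rfl hne
      · exact absurd hxy hcb
      · rw [hu2b, hu2d, hv1b, hv1d]; omega
      · have h0 : u2 y = 0 := hu2o y hy.1 hy.2.1 hy.2.2.1 hy.2.2.2
        have hv0 : v1 y = 0 := rk3_0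
          (by rintro (h | h | h)
              exacts [hy.1 h, hy.2.1 h, nab (h.le.trans hxy)])
          hy.2.2.2 hy.2.2.1
        rw [h0, hv0, hu2b, hv1b]; omega
    · rcases classify y with rfl | rfl | rfl | rfl | hy
      · exact absurd hxy nac
      · exact absurd hxy hbc
      · exact absurd rfl hne
      · rw [hu2c, hu2d]; omega
      · have h0 : u2 y = 0 := hu2o y hy.1 hy.2.1 hy.2.2.1 hy.2.2.2
        have hv0 : v1 y = 0 := rk3_0
          (by rintro (h | h | h)
              exacts [hy.1 h, hy.2.1 h, nac (h.le.trans hxy)])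
          hy.2.2.2 hy.2.2.1
        rw [h0, hv0, hu2c, hv1c]; omega
    · rcases classify y with rfl | rfl | rfl | rfl | hy
      · exact absurd hxy nad
      · exact absurd hxy nbd
      · exact absurd hxy ncd
      · exact absurd rfl hne
      · have h0 : u2 y = 0 := hu2o y hy.1 hy.2.1 hy.2.2.1 hy.2.2.2
        have hv0 : v1 y = 0 := rk3_0
          (by rintro (h | h | h)
              exacts [hy.1 h, hy.2.1 h, nad (h.le.trans hxy)])
          hy.2.2.2 hy.2.2.1
        rw [h0, hv0, hu2d, hv1d]; omega
    · have h0x : u2 x = 0 := hu2o x hx.1 hx.2.1 hx.2.2.1 hx.2.2.2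
      rcases classify y with rfl | rfl | rfl | rfl | hy
      · -- y = a ≤ x, x ≠ a : genuine weak constraint
        have hax : y < x := lt_of_le_of_ne hxy (fun h => hne h.symm)
        have ex : v1 x = 3 := rk3_1 (Or.inr (Or.inr hax))
        rw [h0x, hu2a, hv1a, ex]; omega
      · rw [h0x, hu2b]; omega
      · rw [h0x, hu2c]; omega
      · rw [h0x, hu2d]; omega
      · have h0y : u2 y = 0 := hu2o y hy.1 hy.2.1 hy.2.2.1 hy.2.2.2
        refine ⟨fun _ => ?_, fun h => by rw [h0x, h0y] at h; omega⟩
        by_cases hay : a < y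
        · have e1 : v1 y = 3 := rk3_1 (Or.inr (Or.inr hay))
          have e2 : v1 x = 3 := rk3_1 (Or.inr (Or.inr (hay.trans_le hxy)))
          rw [e1, e2]
        · have e1 : v1 y = 0 := rk3_0 (by tauto) hy.2.2.2 hy.2.2.1
          rw [e1]; exact Nat.zero_le _
  have B1 : ∀ x y : X, y ≤ x → (u1 y ≤ u1 x → v3 y ≤ v3 x) ∧ (u1 y < u1 x → v3 y < v3 x) := by
    intro x y hxy
    by_cases hne : x = y
    · subst hne; exact ⟨fun _ => le_rfl, fun h => absurd h (lt_irrefl _)⟩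
    rcases classify x with rfl | rfl | rfl | rfl | hx
    · rcases classify y with rfl | rfl | rfl | rfl | hy
      · exact absurd rfl hne
      · rw [hu1a, hu1b, hv3a, hv3b]; omega
      · rw [hu1a, hu1c]; omega
      · rw [hu1a, hu1d]; omega
      · have h0 : u1 y = 0 := hu1o y hy.1 hy.2.1 hy.2.2.1 hy.2.2.2
        have hv0 : v3 y = 0 := rk3_0 hy.2.2.1
          (by rintro (h | h | h)
              exacts [hy.1 h, hy.2.1 h, absurd (lt_of_lt_of_le h hxy) (lt_irrefl _)])
          hy.2.2.2
        rw [h0, hv0, hu1a, hv3a]; omega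
    · rcases classify y with rfl | rfl | rfl | rfl | hy
      · exact absurd hxy nab
      · exact absurd rfl hne
      · exact absurd hxy hcb
      · rw [hu1d, hu1b]; omega
      · have h0 : u1 y = 0 := hu1o y hy.1 hy.2.1 hy.2.2.1 hy.2.2.2
        have hv0 : v3 y = 0 := rk3_0 hy.2.2.1
          (by rintro (h | h | h)
              exacts [hy.1 h, hy.2.1 h, nab (h.le.trans hxy)])
          hy.2.2.2
        rw [h0, hv0, hu1b, hv3b]; omega
    · rcases classify y with rfl | rfl | rfl | rfl | hy
      · exact absurd hxy nac
      · exact absurd hxy hbc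
      · exact absurd rfl hne
      · rw [hu1d, hu1c]; omega
      · have h0 : u1 y = 0 := hu1o y hy.1 hy.2.1 hy.2.2.1 hy.2.2.2
        have hv0 : v3 y = 0 := rk3_0 hy.2.2.1
          (by rintro (h | h | h)
              exacts [hy.1 h, hy.2.1 h, nac (h.le.trans hxy)])
          hy.2.2.2
        rw [h0, hv0, hu1c, hv3c]; omega
    · rcases classify y with rfl | rfl | rfl | rfl | hy
      · exact absurd hxy nad
      · exact absurd hxy nbd
      · exact absurd hxy ncd
      · exact absurd rfl hne
      · have h0 : u1 y = 0 := hu1o y hy.1 hy.2.1 hy.2.2.1 hy.2.2.2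
        have hv0 : v3 y = 0 := rk3_0 hy.2.2.1
          (by rintro (h | h | h)
              exacts [hy.1 h, hy.2.1 h, nad (h.le.trans hxy)])
          hy.2.2.2
        rw [h0, hv0, hu1d, hv3d]; omega
    · have h0x : u1 x = 0 := hu1o x hx.1 hx.2.1 hx.2.2.1 hx.2.2.2
      rcases classify y with rfl | rfl | rfl | rfl | hy
      · rw [h0x, hu1a]; omega
      · rw [h0x, hu1b]; omega
      · rw [h0x, hu1c]; omega
      · rw [h0x, hu1d]; omega
      · have h0y : u1 y = 0 := hu1o y hy.1 hy.2.1 hy.2.2.1 hy.2.2.2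
        refine ⟨fun _ => ?_, fun h => by rw [h0x, h0y] at h; omega⟩
        by_cases hay : a < y
        · have e1 : v3 y = 4 := rk3_2 hy.2.2.1 (Or.inr (Or.inr hay))
          have e2 : v3 x = 4 := rk3_2 hx.2.2.1 (Or.inr (Or.inr (hay.trans_le hxy)))
          rw [e1, e2]
        · have e1 : v3 y = 0 := rk3_0 hy.2.2.1 (by tauto) hy.2.2.2
          rw [e1]; exact Nat.zero_le _
  have B2 : ∀ x y : X, y ≤ x → (u2 y ≤ u2 x → v3 y ≤ v3 x) ∧ (u2 y < u2 x → v3 y < v3 x) := by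
    intro x y hxy
    by_cases hne : x = y
    · subst hne; exact ⟨fun _ => le_rfl, fun h => absurd h (lt_irrefl _)⟩
    rcases classify x with rfl | rfl | rfl | rfl | hx
    · rcases classify y with rfl | rfl | rfl | rfl | hy
      · exact absurd rfl hne
      · rw [hu2a, hu2b]; omega
      · rw [hu2a, hu2c]; omega
      · rw [hu2a, hu2d]; omega
      · have h0 : u2 y = 0 := hu2o y hy.1 hy.2.1 hy.2.2.1 hy.2.2.2
        have hv0 : v3 y = 0 := rk3_0 hy.2.2.1
          (by rintro (h | h | h)
              exacts [hy.1 h, hy.2.1 h, absurd (lt_of_lt_of_le h hxy) (lt_irrefl _)])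
          hy.2.2.2
        rw [h0, hv0, hu2a, hv3a]; omega
    · rcases classify y with rfl | rfl | rfl | rfl | hy
      · exact absurd hxy nab
      · exact absurd rfl hne
      · exact absurd hxy hcb
      · rw [hu2b, hu2d, hv3b, hv3d]; omega
      · have h0 : u2 y = 0 := hu2o y hy.1 hy.2.1 hy.2.2.1 hy.2.2.2
        have hv0 : v3 y = 0 := rk3_0 hy.2.2.1
          (by rintro (h | h | h)
              exacts [hy.1 h, hy.2.1 h, nab (h.le.trans hxy)])
          hy.2.2.2
        rw [h0, hv0, hu2b, hv3b]; omega
    · rcases classify y with rfl | rfl | rfl | rfl | hy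
      · exact absurd hxy nac
      · exact absurd hxy hbc
      · exact absurd rfl hne
      · rw [hu2c, hu2d]; omega
      · have h0 : u2 y = 0 := hu2o y hy.1 hy.2.1 hy.2.2.1 hy.2.2.2
        have hv0 : v3 y = 0 := rk3_0 hy.2.2.1
          (by rintro (h | h | h)
              exacts [hy.1 h, hy.2.1 h, nac (h.le.trans hxy)])
          hy.2.2.2
        rw [h0, hv0, hu2c, hv3c]; omega
    · rcases classify y with rfl | rfl | rfl | rfl | hy
      · exact absurd hxy nad
      · exact absurd hxy nbd
      · exact absurd hxy ncd
      · exact absurd rfl hne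
      · have h0 : u2 y = 0 := hu2o y hy.1 hy.2.1 hy.2.2.1 hy.2.2.2
        have hv0 : v3 y = 0 := rk3_0 hy.2.2.1
          (by rintro (h | h | h)
              exacts [hy.1 h, hy.2.1 h, nad (h.le.trans hxy)])
          hy.2.2.2
        rw [h0, hv0, hu2d, hv3d]; omega
    · have h0x : u2 x = 0 := hu2o x hx.1 hx.2.1 hx.2.2.1 hx.2.2.2
      rcases classify y with rfl | rfl | rfl | rfl | hy
      · have hax : y < x := lt_of_le_of_ne hxy (fun h => hne h.symm)
        have ex : v3 x = 4 := rk3_2 hx.2.2.1 (Or.inr (Or.inr hax))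
        rw [h0x, hu2a, hv3a, ex]; omega
      · rw [h0x, hu2b]; omega
      · rw [h0x, hu2c]; omega
      · rw [h0x, hu2d]; omega
      · have h0y : u2 y = 0 := hu2o y hy.1 hy.2.1 hy.2.2.1 hy.2.2.2
        refine ⟨fun _ => ?_, fun h => by rw [h0x, h0y] at h; omega⟩
        by_cases hay : a < y
        · have e1 : v3 y = 4 := rk3_2 hy.2.2.1 (Or.inr (Or.inr hay))
          have e2 : v3 x = 4 := rk3_2 hx.2.2.1 (Or.inr (Or.inr (hay.trans_le hxy)))
          rw [e1, e2]
        · have e1 : v3 y = 0 := rk3_0 hy.2.2.1 (by tauto) hy.2.2.2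
          rw [e1]; exact Nat.zero_le _
  -- assemble
  set R1 : X → X → Prop := fun x y => u1 y ≤ u1 x with hR1
  set R2 : X → X → Prop := fun x y => u2 y ≤ u2 x with hR2
  set Rv1 : X → X → Prop := fun x y => v1 y ≤ v1 x with hRv1
  set Rv3 : X → X → Prop := fun x y => v3 y ≤ v3 x with hRv3
  have hUB1 : IsUB {R1, R2} Rv1 := by
    refine ⟨isPref_rk v1, ?_⟩
    intro R hR
    rcases hR with rfl | hR
    · exact sc_rank A1
    · rw [Set.mem_singleton_iff] at hR
      subst hR
      exact sc_rank A2
  have hUB3 : IsUB {R1, R2} Rv3 := by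
    refine ⟨isPref_rk v3, ?_⟩
    intro R hR
    rcases hR with rfl | hR
    · exact sc_rank B1
    · rw [Set.mem_singleton_iff] at hR
      subst hR
      exact sc_rank B2
  obtain ⟨Rs, ⟨hRsPref, hRsUB⟩, hRsMin⟩ := hmub R1 R2 (isPref_rk u1) (isPref_rk u2)
  have hSC1 : SC Rs R1 := hRsUB R1 (Set.mem_insert _ _)
  have hSC2 : SC Rs R2 := hRsUB R2 (Set.mem_insert_of_mem _ rfl)
  have step1 : Rs a b := (hSC1 a b hba).1 (by show u1 b ≤ u1 a; rw [hu1a, hu1b])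
  have step2 : Rs b a := by
    by_contra hnot
    have h2 := ((hRsMin Rv1 hUB1 a b hba).2 ⟨step1, hnot⟩).2
    exact h2 (show v1 a ≤ v1 b by rw [hv1a, hv1b])
  have step3 : SPref Rs b d := (hSC2 b d hdb).2
    (by
      constructor
      · show u2 d ≤ u2 b; rw [hu2b, hu2d]; omega
      · show ¬ u2 b ≤ u2 d; rw [hu2b, hu2d]; omega)
  have step4 : ¬ Rs c d := by
    intro h
    have h2 : v1 d ≤ v1 c := (hRsMin Rv1 hUB1 c d hdc).1 h
    rw [hv1c, hv1d] at h2
    omega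
  have step5 : Rs d c := (hRsPref.1 c d).resolve_left step4
  have step6 : ¬ Rs a c := by
    intro h
    have h2 : v3 c ≤ v3 a := (hRsMin Rv3 hUB3 a c hca).1 h
    rw [hv3a, hv3c] at h2
    omega
  have step7 : Rs c a := (hRsPref.1 a c).resolve_left step6
  exact step3.2 (hRsPref.2 (hRsPref.2 step5 step7) step1)

end MUBAux

namespace MUBAux

/-- crown counterexample rank tables -/
def cf1 (K i : ℕ) : ℕ := if i = 1 then 1 else K - 2 * ((i - 1) / 2)
def cf2 (i : ℕ) : ℕ := if i = 1 then 2 else if i = 2 then 1 else if i % 2 = 0 then 3 else 0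
def cg (m i : ℕ) : ℕ :=
  if i = 1 then (if m = 1 then 4 else 2)
  else if i = 2 then (if m = 1 then 3 else 1)
  else if i = 2 * m - 1 then 3
  else if i = 2 * m then 3
  else 2

variable {X : Type*} [PartialOrder X]

set_option maxHeartbeats 2000000 in
theorem crown_no_mub {K : ℕ} {aa : ℕ → X} (hcrown : IsCrown ((· ≤ ·) : X → X → Prop) K aa) :
    ¬ (∀ R1 R2 : X → X → Prop, IsPref R1 → IsPref R2 → ∃ Rs, IsMUB {R1, R2} Rs) := by
  obtain ⟨hK4, hKeven, hincr, hval⟩ := hcrown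
  intro hmub
  classical
  have hKmod : K % 2 = 0 := Nat.even_iff.mp hKeven
  -- adjacency analysis for comparable crown pairs
  have compAA : ∀ i j, 1 ≤ i → i ≤ K → 1 ≤ j → j ≤ K → aa j ≤ aa i → i ≠ j →
      j % 2 = 0 ∧ (i + 1 = j ∨ j + 1 = i ∨ (j = K ∧ i = 1)) := by
    intro i j hi1 hiK hj1 hjK hle hij
    by_cases hadj1 : j = i + 1
    · subst hadj1
      by_cases hje : (i + 1) % 2 = 0
      · exact ⟨hje, Or.inl rfl⟩
      · exfalso
        have h := ((hval i (by omega) (by omega) (Nat.even_iff.mpr (by omega))).2).2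
        rw [if_neg (by omega : ¬ i = K)] at h
        exact h hle
    by_cases hadj2 : i = j + 1
    · subst hadj2
      by_cases hje : j % 2 = 0
      · exact ⟨hje, Or.inr (Or.inl rfl)⟩
      · exfalso
        have h := ((hval (j + 1) (by omega) (by omega) (Nat.even_iff.mpr (by omega))).1).2
        rw [show j + 1 - 1 = j from by omega] at h
        exact h hle
    by_cases hc1 : i = 1 ∧ j = K
    · exact ⟨by omega, Or.inr (Or.inr ⟨hc1.2, hc1.1⟩)⟩
    by_cases hc2 : j = 1 ∧ i = K
    · exfalso
      have h := ((hval K (by omega) le_rfl hKeven).2).2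
      rw [if_pos rfl] at h
      rw [hc2.1, hc2.2] at hle
      exact h hle
    rcases Nat.lt_or_ge i j with hlt | hge
    · exact absurd hle (hincr i j hi1 (by omega) hjK (by tauto)).2
    · exact absurd hle (hincr j i hj1 (by omega) hiK (by tauto)).1
  have aInj : ∀ i j, 1 ≤ i → i ≤ K → 1 ≤ j → j ≤ K → aa i = aa j → i = j := by
    intro i j hi1 hiK hj1 hjK heq
    by_contra hij
    obtain ⟨he1, hd1⟩ := compAA i j hi1 hiK hj1 hjK (le_of_eq heq.symm) hij
    obtain ⟨he2, -⟩ := compAA j i hj1 hjK hi1 hiK (le_of_eq heq) (fun hh => hij hh.symm)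
    rcases hd1 with h1 | h1 | ⟨h1, h2⟩ <;> omega
  have noBelow : ∀ m i, 3 ≤ m → m ≤ K → m % 2 = 1 → 1 ≤ i → i ≤ K → ¬ aa m < aa i := by
    intro m i hm3 hmK hmo hi1 hiK h
    by_cases hmi : m = i
    · subst hmi; exact lt_irrefl _ h
    · have := (compAA i m hi1 hiK (by omega) hmK h.le (fun hh => hmi hh.symm)).1
      omega
  -- crown membership and the rank functions
  set crown : X → Prop := fun x => ∃ i, 1 ≤ i ∧ i ≤ K ∧ aa i = x with hcrowndef
  have crownAt : ∀ i, 1 ≤ i → i ≤ K → crown (aa i) := fun i h1 h2 => ⟨i, h1, h2, rfl⟩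
  have evalAt : ∀ (i : ℕ), 1 ≤ i → i ≤ K → ∀ (h : crown (aa i)), h.choose = i := by
    intro i h1 h2 h
    obtain ⟨hc1, hc2, hc3⟩ := h.choose_spec
    exact aInj _ _ hc1 hc2 h1 h2 hc3
  set big : X → Prop := fun x => ∃ m', 3 ≤ m' ∧ m' ≤ K ∧ m' % 2 = 1 ∧ aa m' < x with hbigdef
  set U : (ℕ → ℕ) → X → ℕ := fun f x => if h : crown x then f h.choose else 0 with hU
  set Vv : ℕ → X → ℕ :=
    fun m x => if h : crown x then cg m h.choose else (if big x then 5 else 0) with hVv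
  have UAt : ∀ (f : ℕ → ℕ) i, 1 ≤ i → i ≤ K → U f (aa i) = f i := by
    intro f i h1 h2
    have hc : crown (aa i) := crownAt i h1 h2
    rw [show U f (aa i) = f hc.choose from dif_pos hc, evalAt i h1 h2 hc]
  have UNot : ∀ (f : ℕ → ℕ) x, ¬ crown x → U f x = 0 := by
    intro f x h
    exact dif_neg h
  have VAt : ∀ m i, 1 ≤ i → i ≤ K → Vv m (aa i) = cg m i := by
    intro m i h1 h2
    have hc : crown (aa i) := crownAt i h1 h2
    rw [show Vv m (aa i) = cg m hc.choose from dif_pos hc, evalAt i h1 h2 hc]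
  have VNotBig : ∀ m x, ¬ crown x → big x → Vv m x = 5 := by
    intro m x h hb
    rw [show Vv m x = (if big x then 5 else 0) from dif_neg h, if_pos hb]
  have VNot0 : ∀ m x, ¬ crown x → ¬ big x → Vv m x = 0 := by
    intro m x h hb
    rw [show Vv m x = (if big x then 5 else 0) from dif_neg h, if_neg hb]
  have cgLo : ∀ m i, 1 ≤ cg m i := by
    intro m i; simp only [cg]; split_ifs <;> omega
  have cgHi : ∀ m i, cg m i ≤ 4 := by
    intro m i; simp only [cg]; split_ifs <;> omega
  -- the generic single-crossing check
  have SCgen : ∀ (f : ℕ → ℕ) (m : ℕ), 1 ≤ m → m ≤ K / 2 →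
      (∀ r, 1 ≤ r → r ≤ K / 2 →
        (f (2 * r) ≤ f (2 * r - 1) → cg m (2 * r) ≤ cg m (2 * r - 1)) ∧
        (f (2 * r) < f (2 * r - 1) → cg m (2 * r) < cg m (2 * r - 1))) →
      (∀ r, 1 ≤ r → r < K / 2 →
        (f (2 * r) ≤ f (2 * r + 1) → cg m (2 * r) ≤ cg m (2 * r + 1)) ∧
        (f (2 * r) < f (2 * r + 1) → cg m (2 * r) < cg m (2 * r + 1))) →
      ((f K ≤ f 1 → cg m K ≤ cg m 1) ∧ (f K < f 1 → cg m K < cg m 1)) →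
      (∀ j, 1 ≤ j → j ≤ K → f j = 0 → 3 ≤ j ∧ j % 2 = 1) →
      ∀ x y : X, y ≤ x →
        (U f y ≤ U f x → Vv m y ≤ Vv m x) ∧ (U f y < U f x → Vv m y < Vv m x) := by
    intro f m hm1 hm2 N1 N2 N3 N6 x y hxy
    by_cases hcx : crown x <;> by_cases hcy : crown y
    · obtain ⟨i, hi1, hiK, rfl⟩ := hcx
      obtain ⟨j, hj1, hjK, rfl⟩ := hcy
      rw [UAt f i hi1 hiK, UAt f j hj1 hjK, VAt m i hi1 hiK, VAt m j hj1 hjK]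
      by_cases hij : i = j
      · subst hij
        exact ⟨fun _ => le_rfl, fun h => absurd h (lt_irrefl _)⟩
      · obtain ⟨hje, hd⟩ := compAA i j hi1 hiK hj1 hjK hxy hij
        rcases hd with hcase | hcase | ⟨hcase1, hcase2⟩
        · have hN := N1 (j / 2) (by omega) (by omega)
          rw [show 2 * (j / 2) = j from by omega] at hN
          rw [show j - 1 = i from by omega] at hN
          exact hN
        · have hN := N2 (j / 2) (by omega) (by omega)
          rw [show 2 * (j / 2) = j from by omega] at hN
          rw [show j + 1 = i from hcase] at hN
          exact hN
        · subst hcase1; subst hcase2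
          exact N3
    · obtain ⟨i, hi1, hiK, rfl⟩ := hcx
      have hnb : ¬ big y := by
        rintro ⟨m', h3, hK', hodd, hlt⟩
        exact noBelow m' i h3 hK' (by omega) hi1 hiK (lt_of_lt_of_le hlt hxy)
      rw [UAt f i hi1 hiK, UNot f y hcy, VAt m i hi1 hiK, VNot0 m y hcy hnb]
      exact ⟨fun _ => by have := cgLo m i; omega, fun _ => by have := cgLo m i; omega⟩
    · obtain ⟨j, hj1, hjK, rfl⟩ := hcy
      rw [UAt f j hj1 hjK, UNot f x hcx, VAt m j hj1 hjK]
      constructor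
      · intro hw
        have hf0 : f j = 0 := by omega
        obtain ⟨hj3, hjo⟩ := N6 j hj1 hjK hf0
        have hbx : big x := ⟨j, hj3, hjK, hjo,
          lt_of_le_of_ne hxy (fun hh => hcx (hh ▸ crownAt j hj1 hjK))⟩
        rw [VNotBig m x hcx hbx]
        have := cgHi m j; omega
      · intro hs
        omega
    · rw [UNot f x hcx, UNot f y hcy]
      constructor
      · intro _
        by_cases hby : big y
        · obtain ⟨m', h3, hK', hodd, hlt⟩ := hby
          rw [VNotBig m y hcy ⟨m', h3, hK', hodd, hlt⟩,
            VNotBig m x hcx ⟨m', h3, hK', hodd, lt_of_lt_of_le hlt hxy⟩]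
        · rw [VNot0 m y hcy hby]
          exact Nat.zero_le _
      · intro hs
        omega
  -- numeric obligations
  have N1a : ∀ r, 1 ≤ r → r ≤ K / 2 → ∀ m,
      (cf1 K (2 * r) ≤ cf1 K (2 * r - 1) → cg m (2 * r) ≤ cg m (2 * r - 1)) ∧
      (cf1 K (2 * r) < cf1 K (2 * r - 1) → cg m (2 * r) < cg m (2 * r - 1)) := by
    intro r hr1 hr2 m
    simp only [cf1, cg]
    split_ifs <;> omega
  have N2a : ∀ r, 1 ≤ r → r < K / 2 → ∀ m,
      (cf1 K (2 * r) ≤ cf1 K (2 * r + 1) → cg m (2 * r) ≤ cg m (2 * r + 1)) ∧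
      (cf1 K (2 * r) < cf1 K (2 * r + 1) → cg m (2 * r) < cg m (2 * r + 1)) := by
    intro r hr1 hr2 m
    simp only [cf1, cg]
    split_ifs <;> omega
  have N3a : ∀ m, (cf1 K K ≤ cf1 K 1 → cg m K ≤ cg m 1) ∧
      (cf1 K K < cf1 K 1 → cg m K < cg m 1) := by
    intro m
    simp only [cf1, cg]
    split_ifs <;> omega
  have N6a : ∀ j, 1 ≤ j → j ≤ K → cf1 K j = 0 → 3 ≤ j ∧ j % 2 = 1 := by
    intro j h1 h2 h0
    simp only [cf1] at h0
    split_ifs at h0 <;> omega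
  have N1b : ∀ r, 1 ≤ r → r ≤ K / 2 → ∀ m,
      (cf2 (2 * r) ≤ cf2 (2 * r - 1) → cg m (2 * r) ≤ cg m (2 * r - 1)) ∧
      (cf2 (2 * r) < cf2 (2 * r - 1) → cg m (2 * r) < cg m (2 * r - 1)) := by
    intro r hr1 hr2 m
    simp only [cf2, cg]
    split_ifs <;> omega
  have N2b : ∀ r, 1 ≤ r → r < K / 2 → ∀ m,
      (cf2 (2 * r) ≤ cf2 (2 * r + 1) → cg m (2 * r) ≤ cg m (2 * r + 1)) ∧
      (cf2 (2 * r) < cf2 (2 * r + 1) → cg m (2 * r) < cg m (2 * r + 1)) := by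
    intro r hr1 hr2 m
    simp only [cf2, cg]
    split_ifs <;> omega
  have N3b : ∀ m, (cf2 K ≤ cf2 1 → cg m K ≤ cg m 1) ∧
      (cf2 K < cf2 1 → cg m K < cg m 1) := by
    intro m
    simp only [cf2, cg]
    split_ifs <;> omega
  have N6b : ∀ j, 1 ≤ j → j ≤ K → cf2 j = 0 → 3 ≤ j ∧ j % 2 = 1 := by
    intro j h1 h2 h0
    simp only [cf2] at h0
    split_ifs at h0 <;> omega
  -- the two preferences
  set R1 : X → X → Prop := fun x y => U (cf1 K) y ≤ U (cf1 K) x with hR1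
  set R2 : X → X → Prop := fun x y => U cf2 y ≤ U cf2 x with hR2
  have UBm : ∀ m, 1 ≤ m → m ≤ K / 2 →
      IsUB {R1, R2} (fun x y => Vv m y ≤ Vv m x) := by
    intro m hm1 hm2
    refine ⟨isPref_rk (Vv m), ?_⟩
    intro R hR
    rcases hR with rfl | hR
    · exact sc_rank (SCgen (cf1 K) m hm1 hm2 (fun r h1 h2 => N1a r h1 h2 m)
        (fun r h1 h2 => N2a r h1 h2 m) (N3a m) N6a)
    · rw [Set.mem_singleton_iff] at hR
      subst hR
      exact sc_rank (SCgen cf2 m hm1 hm2 (fun r h1 h2 => N1b r h1 h2 m)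
        (fun r h1 h2 => N2b r h1 h2 m) (N3b m) N6b)
  obtain ⟨Rs, ⟨hRsPref, hRsUB⟩, hRsMin⟩ := hmub R1 R2 (isPref_rk (U (cf1 K))) (isPref_rk (U cf2))
  have hSC1 : SC Rs R1 := hRsUB R1 (Set.mem_insert _ _)
  have hSC2 : SC Rs R2 := hRsUB R2 (Set.mem_insert_of_mem _ rfl)
  -- down edges
  have Adown : ∀ r, 1 ≤ r → r ≤ K / 2 → Rs (aa (2 * r - 1)) (aa (2 * r)) := by
    intro r hr1 hr2
    have hle : aa (2 * r) ≤ aa (2 * r - 1) := by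
      have := ((hval (2 * r) (by omega) (by omega) (Nat.even_iff.mpr (by omega))).1).1
      exact this
    by_cases hr : r = 1
    · subst hr
      refine (hSC2 _ _ hle).1 ?_
      show U cf2 (aa (2 * 1)) ≤ U cf2 (aa (2 * 1 - 1))
      rw [UAt _ (2 * 1) (by omega) (by omega), UAt _ (2 * 1 - 1) (by omega) (by omega)]
      simp only [cf2]
      split_ifs <;> omega
    · refine (hSC1 _ _ hle).1 ?_
      show U (cf1 K) (aa (2 * r)) ≤ U (cf1 K) (aa (2 * r - 1))
      rw [UAt _ (2 * r) (by omega) (by omega), UAt _ (2 * r - 1) (by omega) (by omega)]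
      simp only [cf1]
      split_ifs <;> omega
  -- up edges (via minimality)
  have Bup : ∀ r, 1 ≤ r → r ≤ K / 2 → ¬ Rs (aa (if 2 * r = K then 1 else 2 * r + 1)) (aa (2 * r)) := by
    intro r hr1 hr2 hRs
    have hle : aa (2 * r) ≤ aa (if 2 * r = K then 1 else 2 * r + 1) := by
      have := ((hval (2 * r) (by omega) (by omega) (Nat.even_iff.mpr (by omega))).2).1
      exact this
    have h2 : Vv r (aa (2 * r)) ≤ Vv r (aa (if 2 * r = K then 1 else 2 * r + 1)) :=
      (hRsMin _ (UBm r hr1 hr2) _ _ hle).1 hRs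
    rw [VAt r (2 * r) (by omega) (by omega)] at h2
    by_cases hK2r : 2 * r = K
    · rw [if_pos hK2r] at h2
      rw [VAt r 1 (by omega) (by omega)] at h2
      simp only [cg] at h2
      split_ifs at h2 <;> omega
    · rw [if_neg hK2r] at h2
      rw [VAt r (2 * r + 1) (by omega) (by omega)] at h2
      simp only [cg] at h2
      split_ifs at h2 <;> omega
  -- walk around the crown
  have Hm : ∀ k, 1 ≤ k → k ≤ K → Rs (aa 1) (aa k) := by
    intro k
    induction k using Nat.strong_induction_on with
    | _ k IH =>
    intro h1 hK
    by_cases hk1 : k = 1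
    · subst hk1
      exact (hRsPref.1 (aa 1) (aa 1)).elim id id
    by_cases hke : k % 2 = 0
    · have hA := Adown (k / 2) (by omega) (by omega)
      rw [show 2 * (k / 2) = k from by omega] at hA
      exact hRsPref.2 (IH (k - 1) (by omega) (by omega) (by omega)) hA
    · have hB := Bup ((k - 1) / 2) (by omega) (by omega)
      have hB' := (hRsPref.1 (aa (if 2 * ((k - 1) / 2) = K then 1 else 2 * ((k - 1) / 2) + 1))
        (aa (2 * ((k - 1) / 2)))).resolve_left hB
      rw [if_neg (show ¬ 2 * ((k - 1) / 2) = K from by omega)] at hB'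
      rw [show 2 * ((k - 1) / 2) = k - 1 from by omega] at hB'
      rw [show k - 1 + 1 = k from by omega] at hB'
      exact hRsPref.2 (IH (k - 1) (by omega) (by omega) (by omega)) hB'
  have hfinal := Bup (K / 2) (by omega) (by omega)
  rw [if_pos (show 2 * (K / 2) = K from by omega)] at hfinal
  rw [show 2 * (K / 2) = K from by omega] at hfinal
  exact hfinal (Hm K (by omega) le_rfl)

end MUBAux

/-- Existence theorem: the following are equivalent: (1) every set of preferences has a
minimum upper bound; (2) every pair of preferences has a minimum upper bound; (3) the
partial order is crown- and diamond-free. -/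
theorem existence_tfae (X : Type*) [Nonempty X] [PartialOrder X] :
    ((∀ P : Set (X → X → Prop), (∀ R ∈ P, IsPref R) → ∃ Rs, IsMUB P Rs) ↔
      (∀ R1 R2 : X → X → Prop, IsPref R1 → IsPref R2 → ∃ Rs, IsMUB {R1, R2} Rs)) ∧
    ((∀ R1 R2 : X → X → Prop, IsPref R1 → IsPref R2 → ∃ Rs, IsMUB {R1, R2} Rs) ↔
      (CrownFree (· ≤ · : X → X → Prop) ∧ DiamondFree (· ≤ · : X → X → Prop))) := by
  have L23 : (∀ R1 R2 : X → X → Prop, IsPref R1 → IsPref R2 → ∃ Rs, IsMUB {R1, R2} Rs) →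
      (CrownFree (· ≤ · : X → X → Prop) ∧ DiamondFree (· ≤ · : X → X → Prop)) := by
    intro h2
    constructor
    · rintro ⟨K, a, hcr⟩
      exact MUBAux.crown_no_mub hcr h2
    · rintro ⟨a, b, c, d, hdia⟩
      exact MUBAux.diamond_no_mub hdia h2
  have L31 : (CrownFree (· ≤ · : X → X → Prop) ∧ DiamondFree (· ≤ · : X → X → Prop)) →
      ∀ P : Set (X → X → Prop), (∀ R ∈ P, IsPref R) → ∃ Rs, IsMUB P Rs :=
    fun h3 P hP => MUBAux.exists_mub hP h3.2 h3.1
  have L12 : (∀ P : Set (X → X → Prop), (∀ R ∈ P, IsPref R) → ∃ Rs, IsMUB P Rs) →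
      ∀ R1 R2 : X → X → Prop, IsPref R1 → IsPref R2 → ∃ Rs, IsMUB {R1, R2} Rs := by
    intro h1 R1 R2 hR1 hR2
    refine h1 {R1, R2} ?_
    rintro R hR
    rcases hR with rfl | hR
    · exact hR1
    · rw [Set.mem_singleton_iff] at hR
      subst hR
      exact hR2
  exact ⟨⟨L12, fun h2 => L31 (L23 h2)⟩, ⟨L23, fun h3 => L12 (L31 h3)⟩⟩
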